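/- Suppose T and C are conditionally independent given (A, W), T has conditional survival function S₀(t|a,w) := P(T > t | A=a, W=w) with S₀(t|a,w) > 0, and C has left-continuous conditional survival function G₀(t|a,w) := P(C ≥ t | A=a, W=w), and let Y = min(T,C), Δ = 1{T ≤ C}. In the discrete-time setting where T is supported on a finite grid, E[Δ·1{Y ≤ t}/G₀(Y|A,W) | A=a, W=w] = 1 − S₀(t|a,w) = P(T ≤ t | A=a, W=w). -/

import Mathlib

open MeasureTheory ProbabilityTheory
open scoped Classical

/- IPCW identity: conditioning on the event `B` (representing `{A = a, W = w}`),
with `T` an event time supported on a finite grid, `C` a censoring time conditionally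
independent of `T` given `B`, `S₀ u = P(T > u | B)`, `G₀ u = P(C ≥ u | B)`,
`Y = min(T,C)` and `Δ = 1{T ≤ C}`, one has
`E[Δ·1{Y ≤ t}/G₀(Y) | B] = 1 - S₀ t = P(T ≤ t | B)`. -/
theorem stmt_15 {Ω : Type*} [MeasurableSpace Ω] (P : Measure Ω) [IsProbabilityMeasure P]
    (B : Set Ω) (hB : MeasurableSet B)
    (T C : Ω → ℝ) (hT : Measurable T) (hC : Measurable C)
    (hindep : ∀ s u : Set ℝ, MeasurableSet s → MeasurableSet u →
      ProbabilityTheory.cond P B (T ⁻¹' s ∩ C ⁻¹' u) =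
        ProbabilityTheory.cond P B (T ⁻¹' s) * ProbabilityTheory.cond P B (C ⁻¹' u))
    (grid : Finset ℝ) (hgrid : ∀ ω, T ω ∈ grid)
    (S₀ G₀ : ℝ → ℝ)
    (hS₀ : ∀ u, S₀ u = (ProbabilityTheory.cond P B {ω | u < T ω}).toReal)
    (hG₀ : ∀ u, G₀ u = (ProbabilityTheory.cond P B {ω | u ≤ C ω}).toReal)
    (t : ℝ) (hS₀pos : 0 < S₀ t)
    (hG₀pos : ∀ ω, T ω ≤ t → 0 < G₀ (T ω)) :
    (∫ ω, (if T ω ≤ C ω ∧ min (T ω) (C ω) ≤ t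
        then 1 / G₀ (min (T ω) (C ω)) else 0) ∂(ProbabilityTheory.cond P B))
      = 1 - S₀ t ∧
    1 - S₀ t = (ProbabilityTheory.cond P B {ω | T ω ≤ t}).toReal := by
  set μ := ProbabilityTheory.cond P B with hμ
  have hPB : P B ≠ 0 := by
    intro h
    have hz : μ = 0 := hμ.trans (ProbabilityTheory.cond_eq_zero_of_meas_eq_zero h)
    rw [hS₀ t, hz] at hS₀pos
    simp at hS₀pos
  have hprob : IsProbabilityMeasure μ := ProbabilityTheory.cond_isProbabilityMeasure hPB
  set s : Finset ℝ := grid.filter (fun x => x ≤ t) with hs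
  have hmeas : ∀ x : ℝ, MeasurableSet (T ⁻¹' {x} ∩ C ⁻¹' Set.Ici x) :=
    fun x => (hT (measurableSet_singleton x)).inter (hC measurableSet_Ici)
  -- pointwise decomposition
  have hpoint : ∀ ω, (if T ω ≤ C ω ∧ min (T ω) (C ω) ≤ t
        then 1 / G₀ (min (T ω) (C ω)) else 0)
      = ∑ x ∈ s, Set.indicator (T ⁻¹' {x} ∩ C ⁻¹' Set.Ici x) (fun _ => 1 / G₀ x) ω := by
    intro ω
    by_cases h : T ω ≤ C ω ∧ T ω ≤ t
    · have hmin : min (T ω) (C ω) = T ω := min_eq_left h.1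
      rw [Finset.sum_eq_single (T ω)]
      · have hmem : ω ∈ T ⁻¹' {T ω} ∩ C ⁻¹' Set.Ici (T ω) := ⟨rfl, h.1⟩
        rw [if_pos ⟨h.1, by rw [hmin]; exact h.2⟩, Set.indicator_of_mem hmem, hmin]
      · intro b hb hne
        apply Set.indicator_of_notMem
        intro hb'
        exact hne (hb'.1.symm)
      · intro hns
        exact (hns (by simp [hs, Finset.mem_filter, hgrid ω, h.2])).elim
    · have h1 : ¬ (T ω ≤ C ω ∧ min (T ω) (C ω) ≤ t) := by
        rintro ⟨h21, h22⟩
        rw [min_eq_left h21] at h22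
        exact h ⟨h21, h22⟩
      rw [if_neg h1, eq_comm]
      apply Finset.sum_eq_zero
      intro x hx
      apply Set.indicator_of_notMem
      rintro ⟨hx1, hx2⟩
      have hTx : T ω = x := hx1
      exact h ⟨hTx ▸ hx2, hTx ▸ (Finset.mem_filter.mp hx).2⟩
  have hint : (∫ ω, (if T ω ≤ C ω ∧ min (T ω) (C ω) ≤ t
        then 1 / G₀ (min (T ω) (C ω)) else 0) ∂μ)
      = ∑ x ∈ s, (μ (T ⁻¹' {x} ∩ C ⁻¹' Set.Ici x)).toReal * (1 / G₀ x) := by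
    simp_rw [hpoint]
    rw [integral_finset_sum _ (fun x _ => (integrable_const _).indicator (hmeas x))]
    refine Finset.sum_congr rfl fun x hx => ?_
    rw [integral_indicator_const _ (hmeas x)]
    simp [mul_comm, measureReal_def]
  have hterm : ∀ x ∈ s, (μ (T ⁻¹' {x} ∩ C ⁻¹' Set.Ici x)).toReal * (1 / G₀ x)
      = (μ (T ⁻¹' {x})).toReal := by
    intro x hx
    have hx' : x ≤ t := (Finset.mem_filter.mp hx).2
    have hprod := hindep {x} (Set.Ici x) (measurableSet_singleton x) measurableSet_Ici
    by_cases h0 : μ (T ⁻¹' {x}) = 0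
    · rw [hprod, h0]
      simp
    · obtain ⟨ω, hω⟩ : (T ⁻¹' {x}).Nonempty := by
        by_contra hne
        rw [Set.not_nonempty_iff_eq_empty] at hne
        exact h0 (by rw [hne]; simp)
      have hTω : T ω = x := hω
      have hG : 0 < G₀ x := by
        have := hG₀pos ω (hTω ▸ hx')
        rwa [hTω] at this
      have hGx : G₀ x = (μ (C ⁻¹' Set.Ici x)).toReal := by
        rw [hG₀ x]
        rfl
      rw [hprod, ENNReal.toReal_mul, ← hGx, mul_assoc, mul_one_div, div_self (ne_of_gt hG),
        mul_one]
  have hsum : ∑ x ∈ s, (μ (T ⁻¹' {x})).toReal = (μ {ω | T ω ≤ t}).toReal := by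
    have hset : {ω | T ω ≤ t} = ⋃ x ∈ s, T ⁻¹' {x} := by
      ext ω
      simp only [Set.mem_setOf_eq, Set.mem_iUnion, Set.mem_preimage, Set.mem_singleton_iff,
        hs, Finset.mem_filter]
      constructor
      · intro h
        exact ⟨T ω, ⟨hgrid ω, h⟩, rfl⟩
      · rintro ⟨x, ⟨_, hxt⟩, hTx⟩
        rw [hTx]; exact hxt
    rw [hset, measure_biUnion_finset ?_ (fun x _ => hT (measurableSet_singleton x)),
      ENNReal.toReal_sum (fun x _ => measure_ne_top μ _)]
    intro x _ y _ hxy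
    refine Set.disjoint_left.mpr fun ω hωx hωy => hxy ?_
    have h1 : T ω = x := hωx
    have h2 : T ω = y := hωy
    rw [← h1, h2]
  have hcompl : (μ {ω | T ω ≤ t}).toReal = 1 - S₀ t := by
    have hset : {ω | T ω ≤ t} = {ω | t < T ω}ᶜ := by
      ext ω; simp [not_lt]
    have hm : MeasurableSet {ω | t < T ω} := hT measurableSet_Ioi
    rw [hset, measure_compl hm (measure_ne_top μ _), measure_univ,
      ENNReal.toReal_sub_of_le prob_le_one ENNReal.one_ne_top, ENNReal.toReal_one, hS₀ t]
  constructor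
  · rw [hint, Finset.sum_congr rfl hterm, hsum, hcompl]
  · rw [← hcompl]
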